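/- arXiv:2407.03731 — 2 statements merged into one kernel-verified Lean document; each statement's English description precedes it below -/
import Mathlib

section
/- Let p(x) = T_n(x) + Σ_{j=0}^{n-1} b_j T_j(x) with real coefficients b_j, where T_j are Chebyshev polynomials of the first kind. Then the roots of p are exactly the eigenvalues of the n×n colleague matrix A = H - (1/2)e_1 c^T, where H is the symmetric tridiagonal matrix with zero diagonal, off-diagonal entries 1/2 except the (n-1,n) and (n,n-1) entries which equal √2/2, e_1 is the first standard basis vector, and c = (b_{n-1}, ..., b_1, √2 b_0). -/
open Polynomial

lemma colleague_spectrum_iff {n : ℕ} (M : Matrix (Fin n) (Fin n) ℂ) (z : ℂ) :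
    z ∈ spectrum ℂ M ↔ ∃ v : Fin n → ℂ, v ≠ 0 ∧ M.mulVec v = z • v := by
  rw [spectrum.mem_iff, Matrix.isUnit_iff_isUnit_det, isUnit_iff_ne_zero, not_ne_iff,
    ← Matrix.exists_mulVec_eq_zero_iff]
  have hrw : ∀ v : Fin n → ℂ, (algebraMap ℂ (Matrix (Fin n) (Fin n) ℂ) z - M).mulVec v
      = z • v - M.mulVec v := by
    intro v
    rw [Matrix.sub_mulVec, Algebra.algebraMap_eq_smul_one, Matrix.smul_mulVec,
      Matrix.one_mulVec]
  constructor
  · rintro ⟨v, hv, he⟩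
    exact ⟨v, hv, by rw [hrw] at he; rwa [sub_eq_zero, eq_comm] at he⟩
  · rintro ⟨v, hv, he⟩
    exact ⟨v, hv, by rw [hrw, he, sub_self]⟩

lemma colleague_hsum {n : ℕ} (hn : 2 ≤ n) (H : Matrix (Fin n) (Fin n) ℝ)
    (hH : ∀ i j : Fin n, H i j =
      if j.val = i.val + 1 ∨ i.val = j.val + 1 then
        (if i.val + j.val = 2 * n - 3 then Real.sqrt 2 / 2 else 1 / 2)
      else 0)
    (w : Fin n → ℂ) (i : Fin n) :
    ∑ j, (H i j : ℂ) * w j =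
      (if h : i.val + 1 < n then
        (if i.val = n - 2 then (Real.sqrt 2 : ℂ) / 2 else 1 / 2) * w ⟨i.val + 1, h⟩ else 0)
      + (if h : 0 < i.val then
        (if i.val = n - 1 then (Real.sqrt 2 : ℂ) / 2 else 1 / 2)
          * w ⟨i.val - 1, Nat.lt_of_le_of_lt (Nat.sub_le _ _) i.isLt⟩ else 0) := by
  have key : ∀ j : Fin n, (H i j : ℂ) * w j =
      (if j.val = i.val + 1 then (H i j : ℂ) * w j else 0)
      + (if i.val = j.val + 1 then (H i j : ℂ) * w j else 0) := by
    intro j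
    by_cases h1 : j.val = i.val + 1
    · rw [if_pos h1, if_neg (by omega), add_zero]
    by_cases h2 : i.val = j.val + 1
    · rw [if_neg h1, if_pos h2, zero_add]
    · rw [if_neg h1, if_neg h2, hH, if_neg (by tauto), add_zero]
      push_cast; ring
  rw [Finset.sum_congr rfl fun j _ => key j, Finset.sum_add_distrib]
  congr 1
  · by_cases h : i.val + 1 < n
    · rw [dif_pos h]
      have hcond : ∀ j : Fin n, (j.val = i.val + 1) = (j = ⟨i.val + 1, h⟩) := by
        intro j; rw [eq_iff_iff, Fin.ext_iff]
      simp_rw [hcond]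
      rw [Finset.sum_ite_eq' Finset.univ (⟨i.val + 1, h⟩ : Fin n)
        (fun j => (H i j : ℂ) * w j), if_pos (Finset.mem_univ _)]
      congr 1
      rw [hH, if_pos (Or.inl rfl)]
      simp only [Fin.val_mk, apply_ite ((↑) : ℝ → ℂ)]
      by_cases hc : i.val = n - 2
      · rw [if_pos (by omega), if_pos hc]; norm_num
      · rw [if_neg (by omega), if_neg hc]; norm_num
    · rw [dif_neg h]
      apply Finset.sum_eq_zero
      intro j _
      rw [if_neg (by have := j.isLt; omega)]
  · by_cases h : 0 < i.val
    · rw [dif_pos h]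
      have hcond : ∀ j : Fin n, (i.val = j.val + 1)
          = (j = ⟨i.val - 1, Nat.lt_of_le_of_lt (Nat.sub_le _ _) i.isLt⟩) := by
        intro j; rw [eq_iff_iff, Fin.ext_iff]; simp only []; omega
      simp_rw [hcond]
      rw [Finset.sum_ite_eq' Finset.univ
        (⟨i.val - 1, Nat.lt_of_le_of_lt (Nat.sub_le _ _) i.isLt⟩ : Fin n)
        (fun j => (H i j : ℂ) * w j), if_pos (Finset.mem_univ _)]
      congr 1
      rw [hH, if_pos (Or.inr (by simp only []; omega))]
      simp only [Fin.val_mk, apply_ite ((↑) : ℝ → ℂ)]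
      have hin := i.isLt
      by_cases hc : i.val = n - 1
      · rw [if_pos (by omega), if_pos hc]; norm_num
      · rw [if_neg (by omega), if_neg hc]; norm_num
    · rw [dif_neg h]
      apply Finset.sum_eq_zero
      intro j _
      rw [if_neg (by omega)]


noncomputable def chebEval (z : ℂ) (k : ℕ) : ℂ := (Polynomial.Chebyshev.T ℂ (k : ℤ)).eval z

lemma chebEval_zero (z : ℂ) : chebEval z 0 = 1 := by
  simp [chebEval, Polynomial.Chebyshev.T_zero]

lemma chebEval_one (z : ℂ) : chebEval z 1 = z := by
  simp [chebEval, Polynomial.Chebyshev.T_one]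

lemma chebEval_rec (z : ℂ) (a b k : ℕ) (ha : a = k + 2) (hb : b = k + 1) :
    chebEval z a = 2 * z * chebEval z b - chebEval z k := by
  subst ha hb
  have h : ((k : ℤ) + 2) = ((k + 2 : ℕ) : ℤ) := by push_cast; ring
  have h1 : ((k : ℤ) + 1) = ((k + 1 : ℕ) : ℤ) := by push_cast; ring
  have := Polynomial.Chebyshev.T_add_two ℂ (k : ℤ)
  rw [h, h1] at this
  simp only [chebEval, this, eval_sub, eval_mul, eval_ofNat, eval_X]

noncomputable def uvec (n : ℕ) (z : ℂ) : Fin n → ℂ :=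
  fun i => if i.val = n - 1 then ((Real.sqrt 2 : ℂ))⁻¹ else chebEval z (n - 1 - i.val)

lemma sqrt2C_ne_zero : ((Real.sqrt 2 : ℝ) : ℂ) ≠ 0 := by
  simp only [ne_eq, Complex.ofReal_eq_zero]
  positivity

lemma sqrt2C_sq : ((Real.sqrt 2 : ℝ) : ℂ) * ((Real.sqrt 2 : ℝ) : ℂ) = 2 := by
  rw [← Complex.ofReal_mul, Real.mul_self_sqrt (by norm_num)]
  norm_num

lemma colleague_mulVec {n : ℕ} (hn : 2 ≤ n)
    (H : Matrix (Fin n) (Fin n) ℝ)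
    (hH : ∀ i j : Fin n, H i j =
      if j.val = i.val + 1 ∨ i.val = j.val + 1 then
        (if i.val + j.val = 2 * n - 3 then Real.sqrt 2 / 2 else 1 / 2)
      else 0)
    (c : Fin n → ℝ)
    (A : Matrix (Fin n) (Fin n) ℝ)
    (hA : ∀ i j : Fin n, A i j = H i j - (1 / 2) * (if i.val = 0 then c j else 0))
    (w : Fin n → ℂ) (i : Fin n) :
    (A.map (algebraMap ℝ ℂ)).mulVec w i =
      ((if h : i.val + 1 < n then
        (if i.val = n - 2 then (Real.sqrt 2 : ℂ) / 2 else 1 / 2) * w ⟨i.val + 1, h⟩ else 0)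
      + (if h : 0 < i.val then
        (if i.val = n - 1 then (Real.sqrt 2 : ℂ) / 2 else 1 / 2)
          * w ⟨i.val - 1, Nat.lt_of_le_of_lt (Nat.sub_le _ _) i.isLt⟩ else 0))
      - (if i.val = 0 then (1 / 2) * ∑ j, (c j : ℂ) * w j else 0) := by
  have hM : ∀ j, (A.map (algebraMap ℝ ℂ)) i j
      = (H i j : ℂ) - (1 / 2) * (if i.val = 0 then (c j : ℂ) else 0) := by
    intro j
    simp only [Matrix.map_apply, Complex.coe_algebraMap, hA]
    push_cast [apply_ite ((↑) : ℝ → ℂ)]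
    norm_num
  have : (A.map (algebraMap ℝ ℂ)).mulVec w i
      = ∑ j, ((H i j : ℂ) - (1 / 2) * (if i.val = 0 then (c j : ℂ) else 0)) * w j := by
    simp only [Matrix.mulVec, dotProduct]
    exact Finset.sum_congr rfl fun j _ => by rw [hM j]
  rw [this]
  simp only [sub_mul]
  rw [Finset.sum_sub_distrib, colleague_hsum hn H hH w i]
  congr 1
  by_cases h0 : i.val = 0
  · simp only [if_pos h0, Finset.mul_sum]
    exact Finset.sum_congr rfl fun j _ => by ring
  · simp only [if_neg h0, mul_zero, zero_mul]
    simp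

lemma colleague_csum {n : ℕ} (hn : 2 ≤ n) (b : ℕ → ℝ)
    (c : Fin n → ℝ)
    (hc : ∀ j : Fin n, c j = if j.val = n - 1 then Real.sqrt 2 * b 0 else b (n - 1 - j.val))
    (z : ℂ) :
    ∑ j, (c j : ℂ) * uvec n z j = ∑ j ∈ Finset.range n, (b j : ℂ) * chebEval z j := by
  have step : ∀ j : Fin n, (c j : ℂ) * uvec n z j
      = (b (n - 1 - j.val) : ℂ) * chebEval z (n - 1 - j.val) := by
    intro j
    rw [hc]
    simp only [uvec]
    by_cases hj : j.val = n - 1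
    · rw [if_pos hj, if_pos hj, show n - 1 - j.val = 0 by omega, chebEval_zero]
      push_cast
      rw [mul_one, mul_comm ((Real.sqrt 2 : ℂ)) _, mul_assoc,
        mul_inv_cancel₀ sqrt2C_ne_zero, mul_one]
    · rw [if_neg hj, if_neg hj]
  rw [Finset.sum_congr rfl fun j _ => step j]
  rw [Fin.sum_univ_eq_sum_range (fun k => (b (n - 1 - k) : ℂ) * chebEval z (n - 1 - k)) n]
  exact Finset.sum_range_reflect (fun k => (b k : ℂ) * chebEval z k) n

lemma colleague_row {n : ℕ} (hn : 2 ≤ n) (b : ℕ → ℝ)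
    (H : Matrix (Fin n) (Fin n) ℝ)
    (hH : ∀ i j : Fin n, H i j =
      if j.val = i.val + 1 ∨ i.val = j.val + 1 then
        (if i.val + j.val = 2 * n - 3 then Real.sqrt 2 / 2 else 1 / 2)
      else 0)
    (c : Fin n → ℝ)
    (hc : ∀ j : Fin n, c j = if j.val = n - 1 then Real.sqrt 2 * b 0 else b (n - 1 - j.val))
    (A : Matrix (Fin n) (Fin n) ℝ)
    (hA : ∀ i j : Fin n, A i j = H i j - (1 / 2) * (if i.val = 0 then c j else 0))
    (z : ℂ) (i : Fin n) :
    (A.map (algebraMap ℝ ℂ)).mulVec (uvec n z) i =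
      z * uvec n z i -
        (if i.val = 0 then
          (chebEval z n + ∑ j ∈ Finset.range n, (b j : ℂ) * chebEval z j) / 2 else 0) := by
  rw [colleague_mulVec hn H hH c A hA, colleague_csum hn b c hc z]
  have hin := i.isLt
  by_cases h0 : i.val = 0
  · rw [dif_pos (show i.val + 1 < n by omega), dif_neg (by omega), if_pos h0, if_pos h0, add_zero]
    simp only [uvec, Fin.val_mk]
    rw [if_neg (show ¬ i.val = n - 1 by omega)]
    have hrec : chebEval z n = 2 * z * chebEval z (n - 1) - chebEval z (n - 2) :=
      chebEval_rec z n (n - 1) (n - 2) (by omega) (by omega)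
    rw [show n - 1 - i.val = n - 1 by omega, hrec]
    by_cases h2 : n = 2
    · rw [if_pos (show i.val = n - 2 by omega), if_pos (show i.val + 1 = n - 1 by omega),
        show n - 2 = 0 by omega, chebEval_zero, div_mul_eq_mul_div,
        mul_inv_cancel₀ sqrt2C_ne_zero]
      ring
    · rw [if_neg (show ¬ i.val = n - 2 by omega), if_neg (show ¬ i.val + 1 = n - 1 by omega),
        show n - 1 - (i.val + 1) = n - 2 by omega]
      ring
  · rw [if_neg h0, if_neg h0, sub_zero]
    by_cases hl : i.val = n - 1
    · rw [dif_neg (by omega), dif_pos (by omega), if_pos hl, zero_add]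
      simp only [uvec, Fin.val_mk]
      rw [if_neg (show ¬ i.val - 1 = n - 1 by omega), if_pos hl,
        show n - 1 - (i.val - 1) = 1 by omega, chebEval_one]
      field_simp
      linear_combination z * sqrt2C_sq
    · rw [dif_pos (show i.val + 1 < n by omega), dif_pos (by omega), if_neg hl]
      simp only [uvec, Fin.val_mk]
      rw [if_neg (show ¬ i.val - 1 = n - 1 by omega), if_neg hl,
        show n - 1 - (i.val - 1) = n - i.val by omega]
      have hrec : chebEval z (n - i.val)
          = 2 * z * chebEval z (n - 1 - i.val) - chebEval z (n - 2 - i.val) :=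
        chebEval_rec z _ _ (n - 2 - i.val) (by omega) (by omega)
      rw [hrec]
      by_cases h2 : i.val = n - 2
      · rw [if_pos h2, if_pos (show i.val + 1 = n - 1 by omega),
          show n - 2 - i.val = 0 by omega, chebEval_zero,
          div_mul_eq_mul_div, mul_inv_cancel₀ sqrt2C_ne_zero]
        ring
      · rw [if_neg h2, if_neg (by omega), show n - 1 - (i.val + 1) = n - 2 - i.val by omega]
        ring



lemma colleague_step {n : ℕ} (hn : 2 ≤ n) (z : ℂ) (w : Fin n → ℂ) (k : ℕ) (hk2 : k + 2 < n)
    (α : ℂ)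
    (heq : (if n - 2 - k = n - 2 then (Real.sqrt 2 : ℂ) / 2 else 1 / 2)
        * w ⟨n - 1 - k, by omega⟩ + 1 / 2 * w ⟨n - 1 - (k + 2), by omega⟩
      = z * w ⟨n - 1 - (k + 1), by omega⟩)
    (ihk : w ⟨n - 1 - k, by omega⟩ = α * (if k = 0 then ((Real.sqrt 2 : ℂ))⁻¹ else chebEval z k))
    (ihk1 : w ⟨n - 1 - (k + 1), by omega⟩ = α * chebEval z (k + 1)) :
    w ⟨n - 1 - (k + 2), by omega⟩ = α * chebEval z (k + 2) := by
  rw [chebEval_rec z (k + 2) (k + 1) k rfl rfl]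
  by_cases hk : k = 0
  · subst hk
    rw [if_pos (show n - 2 - 0 = n - 2 by omega)] at heq
    rw [if_pos rfl] at ihk
    rw [chebEval_zero]
    have hinv : (Real.sqrt 2 : ℂ) * ((Real.sqrt 2 : ℂ))⁻¹ = 1 :=
      mul_inv_cancel₀ sqrt2C_ne_zero
    linear_combination 2 * heq + 2 * z * ihk1 - (Real.sqrt 2 : ℂ) * ihk - α * hinv
  · rw [if_neg (show ¬(n - 2 - k = n - 2) by omega)] at heq
    rw [if_neg hk] at ihk
    linear_combination 2 * heq - ihk + 2 * z * ihk1

lemma colleague_base1 {n : ℕ} (hn : 2 ≤ n) (z : ℂ) (w : Fin n → ℂ)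
    (heq : (Real.sqrt 2 : ℂ) / 2 * w ⟨n - 1 - 1, by omega⟩ = z * w ⟨n - 1, by omega⟩) :
    w ⟨n - 1 - 1, by omega⟩ = (Real.sqrt 2 : ℂ) * w ⟨n - 1, by omega⟩ * chebEval z 1 := by
  rw [chebEval_one]
  apply mul_left_cancel₀ sqrt2C_ne_zero
  linear_combination 2 * heq - (z * w ⟨n - 1, by omega⟩) * sqrt2C_sq

lemma colleague_claim {n : ℕ} (hn : 2 ≤ n)
    (H : Matrix (Fin n) (Fin n) ℝ)
    (hH : ∀ i j : Fin n, H i j =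
      if j.val = i.val + 1 ∨ i.val = j.val + 1 then
        (if i.val + j.val = 2 * n - 3 then Real.sqrt 2 / 2 else 1 / 2)
      else 0)
    (c : Fin n → ℝ)
    (A : Matrix (Fin n) (Fin n) ℝ)
    (hA : ∀ i j : Fin n, A i j = H i j - (1 / 2) * (if i.val = 0 then c j else 0))
    (z : ℂ) (w : Fin n → ℂ)
    (hwe : (A.map (algebraMap ℝ ℂ)).mulVec w = z • w) :
    ∀ m, m < n → w ⟨n - 1 - m, by omega⟩
      = ((Real.sqrt 2 : ℂ) * w ⟨n - 1, by omega⟩)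
        * (if m = 0 then ((Real.sqrt 2 : ℂ))⁻¹ else chebEval z m) := by
  intro m
  induction m using Nat.strong_induction_on with
  | _ m ih =>
    intro hmn
    match m with
    | 0 =>
      rw [if_pos rfl, mul_comm ((Real.sqrt 2 : ℂ)) _, mul_assoc,
        mul_inv_cancel₀ sqrt2C_ne_zero, mul_one]
      rfl
    | 1 =>
      rw [if_neg one_ne_zero]
      have heq := congrFun hwe ⟨n - 1, by omega⟩
      rw [colleague_mulVec hn H hH c A hA w ⟨n - 1, by omega⟩,
        dif_neg (show ¬(n - 1 + 1 < n) by omega),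
        dif_pos (show 0 < n - 1 by omega),
        if_pos (show n - 1 = n - 1 from rfl),
        if_neg (show ¬(n - 1 = 0) by omega), zero_add, sub_zero] at heq
      simp only [Pi.smul_apply, smul_eq_mul, Fin.val_mk] at heq
      exact colleague_base1 hn z w heq
    | (k + 2) =>
      have heq := congrFun hwe ⟨n - 2 - k, by omega⟩
      rw [colleague_mulVec hn H hH c A hA w ⟨n - 2 - k, by omega⟩,
        dif_pos (show n - 2 - k + 1 < n by omega),
        dif_pos (show 0 < n - 2 - k by omega),
        if_neg (show ¬(n - 2 - k = n - 1) by omega),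
        if_neg (show ¬(n - 2 - k = 0) by omega), sub_zero] at heq
      simp only [Pi.smul_apply, smul_eq_mul, Fin.val_mk] at heq
      have e1 : (⟨n - 2 - k + 1, by omega⟩ : Fin n) = ⟨n - 1 - k, by omega⟩ :=
        Fin.ext (by simp only [Fin.val_mk]; omega)
      have e2 : (⟨n - 2 - k - 1, by omega⟩ : Fin n) = ⟨n - 1 - (k + 2), by omega⟩ :=
        Fin.ext (by simp only [Fin.val_mk]; omega)
      have e3 : (⟨n - 2 - k, by omega⟩ : Fin n) = ⟨n - 1 - (k + 1), by omega⟩ :=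
        Fin.ext (by simp only [Fin.val_mk]; omega)
      simp only [e1, e2, e3] at heq
      exact colleague_step hn z w k hmn _ heq (ih k (by omega) (by omega))
        (by have := ih (k + 1) (by omega) (by omega)
            rwa [if_neg (Nat.succ_ne_zero _)] at this)


set_option maxHeartbeats 2000000 in
/-- The roots of `p(x) = T_n(x) + ∑_{j<n} b_j T_j(x)` are exactly the eigenvalues of the
colleague matrix `A = H - (1/2) e₁ cᵀ`. -/
theorem colleague_matrix_roots (n : ℕ) (hn : 2 ≤ n) (b : ℕ → ℝ)
    (H : Matrix (Fin n) (Fin n) ℝ)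
    (hH : ∀ i j : Fin n, H i j =
      if j.val = i.val + 1 ∨ i.val = j.val + 1 then
        (if i.val + j.val = 2 * n - 3 then Real.sqrt 2 / 2 else 1 / 2)
      else 0)
    (c : Fin n → ℝ)
    (hc : ∀ j : Fin n, c j =
      if j.val = n - 1 then Real.sqrt 2 * b 0 else b (n - 1 - j.val))
    (A : Matrix (Fin n) (Fin n) ℝ)
    (hA : ∀ i j : Fin n, A i j = H i j - (1 / 2) * (if i.val = 0 then c j else 0)) :
    ∀ z : ℂ,
      ((Polynomial.Chebyshev.T ℝ (n : ℤ) +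
          ∑ j ∈ Finset.range n, C (b j) * Polynomial.Chebyshev.T ℝ (j : ℤ)).map
            (algebraMap ℝ ℂ)).IsRoot z
        ↔ z ∈ spectrum ℂ (A.map (algebraMap ℝ ℂ)) := by
  intro z
  have hLHS : ((Polynomial.Chebyshev.T ℝ (n : ℤ) +
      ∑ j ∈ Finset.range n, C (b j) * Polynomial.Chebyshev.T ℝ (j : ℤ)).map
        (algebraMap ℝ ℂ)).IsRoot z
      ↔ chebEval z n + ∑ j ∈ Finset.range n, (b j : ℂ) * chebEval z j = 0 := by
    have he : eval z (((Polynomial.Chebyshev.T ℝ (n : ℤ) +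
        ∑ j ∈ Finset.range n, C (b j) * Polynomial.Chebyshev.T ℝ (j : ℤ)).map
          (algebraMap ℝ ℂ)))
        = chebEval z n + ∑ j ∈ Finset.range n, (b j : ℂ) * chebEval z j := by
      rw [Polynomial.map_add, Polynomial.map_sum]
      simp only [Polynomial.map_mul, Polynomial.map_C, Polynomial.Chebyshev.map_T,
        eval_add, eval_finset_sum, eval_mul, eval_C, Complex.coe_algebraMap]
      simp only [chebEval]
    rw [Polynomial.IsRoot, he]
  rw [hLHS, colleague_spectrum_iff]
  constructor
  · intro hP
    refine ⟨uvec n z, ?_, ?_⟩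
    · intro hu
      have h1 := congrFun hu ⟨n - 1, by omega⟩
      simp only [uvec, Fin.val_mk, if_pos rfl, Pi.zero_apply] at h1
      exact inv_ne_zero sqrt2C_ne_zero h1
    · funext i
      rw [colleague_row hn b H hH c hc A hA z i]
      simp only [Pi.smul_apply, smul_eq_mul]
      by_cases h0 : i.val = 0
      · rw [if_pos h0, hP]; ring
      · rw [if_neg h0]; ring
  · rintro ⟨w, hw0, hwe⟩
    have claim := colleague_claim hn H hH c A hA z w hwe
    have halpha : w ⟨n - 1, by omega⟩ ≠ 0 := by
      intro h
      apply hw0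
      funext i
      have hin := i.isLt
      have hcl := claim (n - 1 - i.val) (by omega)
      have hidx : (⟨n - 1 - (n - 1 - i.val), by omega⟩ : Fin n) = i :=
        Fin.ext (by simp only [Fin.val_mk]; omega)
      rw [hidx] at hcl
      rw [hcl, h, mul_zero, zero_mul]
      rfl
    have hwu : w = ((Real.sqrt 2 : ℂ) * w ⟨n - 1, by omega⟩) • uvec n z := by
      funext i
      have hin := i.isLt
      have hcl := claim (n - 1 - i.val) (by omega)
      have hidx : (⟨n - 1 - (n - 1 - i.val), by omega⟩ : Fin n) = i :=
        Fin.ext (by simp only [Fin.val_mk]; omega)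
      rw [hidx] at hcl
      rw [hcl]
      simp only [Pi.smul_apply, smul_eq_mul, uvec]
      congr 1
      by_cases hi : i.val = n - 1
      · rw [if_pos (show n - 1 - i.val = 0 by omega), if_pos hi]
      · rw [if_neg (show ¬ n - 1 - i.val = 0 by omega), if_neg hi]
    rw [hwu, Matrix.mulVec_smul] at hwe
    have h0 := congrFun hwe ⟨0, by omega⟩
    simp only [Pi.smul_apply, smul_eq_mul] at h0
    rw [colleague_row hn b H hH c hc A hA z ⟨0, by omega⟩,
      if_pos (show ((⟨0, by omega⟩ : Fin n) : Fin n).val = 0 from rfl)] at h0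
    have hz : ((Real.sqrt 2 : ℂ) * w ⟨n - 1, by omega⟩)
        * ((chebEval z n + ∑ j ∈ Finset.range n, (b j : ℂ) * chebEval z j) / 2) = 0 := by
      linear_combination -h0
    rcases mul_eq_zero.mp hz with h | h
    · exact absurd h (mul_ne_zero sqrt2C_ne_zero halpha)
    · have := div_eq_zero_iff.mp h
      simpa using this
end

section
/- Let p be a polynomial with a root r of multiplicity ℓ ≥ 1, so that p^{(ℓ)}(r) ≠ 0. Write p(x) = Σ_{j=0}^n b_j φ_j(x) where each φ_j is a polynomial with |φ_j(x)| ≤ 1 on [-1,1] and r ∈ [-1,1]. Then for every 0 < ε sufficiently small, the perturbed polynomial p̃(x) = p(x) + ε φ_k(x) has a root r̃ with |r - r̃| ≤ ε^{1/ℓ} |p^{(ℓ)}(r)/ℓ!|^{-1/ℓ} (1 + o(1)) as ε → 0. -/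
open Polynomial

lemma iter_deriv_of_factor (ℓ : ℕ) (r : ℝ) (p g : ℝ[X]) (hfac : (X - C r) ^ ℓ * g = p) :
    (derivative^[ℓ] p).eval r = (ℓ.factorial : ℝ) * g.eval r := by
  have h1 : (taylor r p).coeff ℓ = g.eval r := by
    rw [← hfac, taylor_apply, mul_comp, pow_comp, sub_comp, X_comp, C_comp]
    have h2 : (X + C r - C r : ℝ[X]) = X := by ring
    rw [h2, ← taylor_apply]
    simpa using coeff_X_pow_mul (taylor r g) ℓ 0
  have h3 : derivative^[ℓ] p = ℓ.factorial • (hasseDeriv ℓ p) := by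
    rw [← factorial_smul_hasseDeriv]; rfl
  rw [h3, taylor_coeff] at *
  simp only [smul_eq_mul, eval_smul, nsmul_eq_mul, eval_natCast, eval_mul] at *
  rw [h1]

/-- Sensitivity of a multiplicity-`ℓ` root under a coefficient perturbation: the perturbed
polynomial `p + ε φ_k` has a root within `ε^{1/ℓ} |p^{(ℓ)}(r)/ℓ!|^{-1/ℓ} (1 + o(1))` of `r`. -/
theorem root_perturbation_bound (n ℓ k : ℕ) (hℓ : 1 ≤ ℓ) (hk : k ≤ n)
    (p : Polynomial ℝ) (hp0 : p ≠ 0)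
    (r : ℝ) (hr : r ∈ Set.Icc (-1 : ℝ) 1)
    (hroot : p.IsRoot r) (hmult : p.rootMultiplicity r = ℓ)
    (φ : ℕ → Polynomial ℝ)
    (hφbd : ∀ j ≤ n, ∀ x ∈ Set.Icc (-1 : ℝ) 1, |(φ j).eval x| ≤ 1)
    (b : ℕ → ℝ) (hrep : p = ∑ j ∈ Finset.range (n + 1), C (b j) * φ j) :
    ∀ δ > 0, ∃ ε₀ > 0, ∀ ε : ℝ, 0 < ε → ε < ε₀ →
      ∃ z : ℂ, ((p + C ε * φ k).map (algebraMap ℝ ℂ)).IsRoot z ∧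
        ‖(r : ℂ) - z‖ ≤
          ε ^ ((1 : ℝ) / ℓ) *
            |(Polynomial.derivative^[ℓ] p).eval r / (Nat.factorial ℓ : ℝ)| ^ (-(1 : ℝ) / ℓ) *
            (1 + δ) := by
  intro δ hδ
  have hℓ0 : ℓ ≠ 0 := by omega
  have hℓR : (0:ℝ) < (ℓ:ℝ) := by exact_mod_cast Nat.pos_of_ne_zero hℓ0
  -- factorization p = (X - r)^ℓ * g, g(r) ≠ 0
  set g : ℝ[X] := p /ₘ (X - C r) ^ ℓ with hgdef
  have hfac : (X - C r) ^ ℓ * g = p := by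
    have := p.pow_mul_divByMonic_rootMultiplicity_eq r
    rwa [hmult] at this
  have hgr : g.eval r ≠ 0 := by
    have := eval_divByMonic_pow_rootMultiplicity_ne_zero r hp0
    rwa [hmult] at this
  set A : ℝ := |g.eval r| with hAdef
  have hA : 0 < A := abs_pos.2 hgr
  have habs : |(derivative^[ℓ] p).eval r / (Nat.factorial ℓ : ℝ)| = A := by
    rw [iter_deriv_of_factor ℓ r p g hfac]
    rw [mul_comm, mul_div_assoc, div_self (by exact_mod_cast Nat.factorial_ne_zero ℓ), mul_one]
  rw [habs]
  -- complex versions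
  set G : ℂ[X] := g.map (algebraMap ℝ ℂ) with hGdef
  set Φ : ℂ[X] := (φ k).map (algebraMap ℝ ℂ) with hΦdef
  have hGr : G.eval (r:ℂ) = ((g.eval r : ℝ) : ℂ) := by
    rw [hGdef, eval_map, ← Complex.coe_algebraMap, eval₂_at_apply]
  have hΦr : Φ.eval (r:ℂ) = (((φ k).eval r : ℝ) : ℂ) := by
    rw [hΦdef, eval_map, ← Complex.coe_algebraMap, eval₂_at_apply]
  have hGr0 : G.eval (r:ℂ) ≠ 0 := by
    rw [hGr]; exact_mod_cast hgr
  have hQev : ∀ ε : ℝ, ∀ w : ℂ, ((p + C ε * φ k).map (algebraMap ℝ ℂ)).eval ((r:ℂ) + w)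
      = w ^ ℓ * G.eval ((r:ℂ)+w) + (ε:ℂ) * Φ.eval ((r:ℂ)+w) := by
    intro ε w
    have hpm : p.map (algebraMap ℝ ℂ) = (X - C (r:ℂ)) ^ ℓ * G := by
      rw [← hfac]
      simp [Polynomial.map_mul, Polynomial.map_pow, Polynomial.map_sub, hGdef]
    rw [Polynomial.map_add, Polynomial.map_mul, Polynomial.map_C, eval_add, eval_mul, eval_C,
      hpm, eval_mul, eval_pow, eval_sub, eval_X, eval_C, add_sub_cancel_left,
      Complex.coe_algebraMap]
  by_cases hφr : (φ k).eval r = 0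
  · -- r itself is a root of the perturbed polynomial
    refine ⟨1, one_pos, fun ε hε _ => ⟨(r:ℂ), ?_, ?_⟩⟩
    · have := hQev ε 0
      simp only [add_zero] at this
      unfold Polynomial.IsRoot
      rw [this, zero_pow hℓ0, zero_mul, zero_add, hΦr, hφr]
      simp
    · simp only [sub_self, norm_zero]
      positivity
  -- main case : φ k does not vanish at r
  have hΦr0 : Φ.eval (r:ℂ) ≠ 0 := by
    rw [hΦr]; exact_mod_cast hφr
  set hfun : ℂ → ℂ := fun z => -Φ.eval z / G.eval z with hhdef
  have hfr0 : hfun (r:ℂ) ≠ 0 := by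
    simp only [hhdef]
    exact div_ne_zero (neg_ne_zero.2 hΦr0) hGr0
  set ρ : ℂ → ℂ := fun w => hfun ((r:ℂ) + w) / hfun (r:ℂ) with hρdef
  have hρ0 : ρ 0 = 1 := by
    simp only [hρdef, add_zero]
    exact div_self hfr0
  set F : ℂ → ℂ := fun w => ρ w ^ ((ℓ:ℂ)⁻¹) with hFdef
  -- analyticity and local Lipschitz bound for F
  have haff : AnalyticAt ℂ (fun w : ℂ => (r:ℂ) + w) 0 := analyticAt_const.add analyticAt_id
  have aG : AnalyticAt ℂ (fun w : ℂ => G.eval ((r:ℂ) + w)) 0 := by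
    have := haff.aeval_polynomial G
    simpa [aeval_def, eval₂_eq_eval_map] using this
  have aΦ : AnalyticAt ℂ (fun w : ℂ => Φ.eval ((r:ℂ) + w)) 0 := by
    have := haff.aeval_polynomial Φ
    simpa [aeval_def, eval₂_eq_eval_map] using this
  have aρ : AnalyticAt ℂ ρ 0 := by
    have ah : AnalyticAt ℂ (fun w : ℂ => hfun ((r:ℂ) + w)) 0 := by
      simp only [hhdef]
      exact AnalyticAt.div aΦ.neg aG (by simpa using hGr0)
    exact ah.div analyticAt_const (by simpa using hfr0)
  have aF : AnalyticAt ℂ F 0 := by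
    refine aρ.cpow analyticAt_const ?_
    rw [hρ0]
    exact Complex.one_mem_slitPlane
  obtain ⟨K, t, ht, hlip⟩ := (aF.contDiffAt (n := 1)).exists_lipschitzOnWith
  -- choose a good radius η
  have hU : ρ ⁻¹' Metric.closedBall 1 δ ∈ nhds (0:ℂ) := by
    have := aρ.continuousAt.preimage_mem_nhds (Metric.closedBall_mem_nhds (ρ 0) hδ)
    rwa [hρ0] at this
  have hV : (fun w : ℂ => G.eval ((r:ℂ) + w)) ⁻¹' {(0:ℂ)}ᶜ ∈ nhds (0:ℂ) := by
    refine aG.continuousAt.preimage_mem_nhds (compl_singleton_mem_nhds ?_)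
    simpa using hGr0
  obtain ⟨η, hη, hsub⟩ := Metric.nhds_basis_closedBall.mem_iff.1
    (Filter.inter_mem (Filter.inter_mem ht hU) hV)
  -- constants
  set B : ℝ := ‖hfun (r:ℂ)‖ with hBdef
  have hB : 0 < B := by
    simpa [hBdef] using hfr0
  have hBA : B ≤ A⁻¹ := by
    have hφ1 : |(φ k).eval r| ≤ 1 := hφbd k hk r hr
    have hBeq : B = |(φ k).eval r| / A := by
      rw [hBdef]
      show ‖-Φ.eval (r:ℂ) / G.eval (r:ℂ)‖ = _
      rw [norm_div, norm_neg, hΦr, hGr, Complex.norm_real, Real.norm_eq_abs, Complex.norm_real, Real.norm_eq_abs]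
    rw [hBeq]
    rw [div_le_iff₀ hA, inv_mul_cancel₀ hA.ne']
    exact hφ1
  set a : ℝ := A ^ ((1:ℝ)/ℓ) with hadef
  have ha : 0 < a := Real.rpow_pos_of_pos hA _
  have hAneg : A ^ (-(1:ℝ)/ℓ) = a⁻¹ := by
    rw [hadef, neg_div, Real.rpow_neg hA.le]
  set Kr : ℝ := (K : ℝ) with hKrdef
  have hKr : 0 ≤ Kr := K.coe_nonneg
  refine ⟨min ((η * a / (1+δ)) ^ ℓ) ((B * (Kr+1) ^ ℓ)⁻¹), by positivity, fun ε hε hεlt => ?_⟩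
  have hε1 : ε < (η * a / (1+δ)) ^ ℓ := lt_of_lt_of_le hεlt (min_le_left _ _)
  have hε2 : ε < (B * (Kr+1) ^ ℓ)⁻¹ := lt_of_lt_of_le hεlt (min_le_right _ _)
  set R : ℝ := ε ^ ((1:ℝ)/ℓ) * A ^ (-(1:ℝ)/ℓ) * (1 + δ) with hRdef
  have hR0 : 0 < R := by
    rw [hRdef]; positivity
  have hεroot : ε ^ ((1:ℝ)/ℓ) < η * a / (1+δ) := by
    have h1 : ε ^ ((1:ℝ)/ℓ) < ((η * a / (1+δ)) ^ ℓ) ^ ((1:ℝ)/ℓ) :=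
      Real.rpow_lt_rpow hε.le hε1 (by positivity)
    have h0 : (0:ℝ) ≤ η * a / (1+δ) := div_nonneg (mul_nonneg hη.le ha.le) (by linarith)
    calc ε ^ ((1:ℝ)/ℓ) < ((η * a / (1+δ)) ^ ℓ) ^ ((1:ℝ)/ℓ) := h1
      _ = η * a / (1+δ) := by rw [one_div]; exact Real.pow_rpow_inv_natCast h0 hℓ0
  have hRη : R ≤ η := by
    rw [hRdef, hAneg]
    calc ε ^ ((1:ℝ)/ℓ) * a⁻¹ * (1+δ) ≤ (η * a / (1+δ)) * a⁻¹ * (1+δ) := by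
          have h2 : (0:ℝ) < 1 + δ := by linarith
          exact mul_le_mul_of_nonneg_right
            (mul_le_mul_of_nonneg_right hεroot.le (inv_nonneg.2 ha.le)) h2.le
      _ = η := by
          have h2 : (0:ℝ) < 1 + δ := by linarith
          field_simp
  -- the contraction map
  set c₀ : ℂ := ((ε:ℂ) * hfun (r:ℂ)) ^ ((ℓ:ℂ)⁻¹) with hc₀def
  have hcast : ((ℓ:ℂ)⁻¹) = ((((1:ℝ)/ℓ : ℝ)) : ℂ) := by
    push_cast
    rw [one_div]
  have habsc : ‖c₀‖ = (ε * B) ^ ((1:ℝ)/ℓ) := by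
    rw [hc₀def, hcast, Complex.norm_cpow_real]
    congr 1
    rw [norm_mul, hBdef, Complex.norm_real, Real.norm_eq_abs, abs_of_pos hε]
  have hc0R : ‖c₀‖ * (1 + δ) ≤ R := by
    have h1 : ‖c₀‖ ≤ ε ^ ((1:ℝ)/ℓ) * A ^ (-(1:ℝ)/ℓ) := by
      rw [habsc, hAneg]
      calc (ε * B) ^ ((1:ℝ)/ℓ) ≤ (ε * A⁻¹) ^ ((1:ℝ)/ℓ) :=
            Real.rpow_le_rpow (by positivity) (mul_le_mul_of_nonneg_left hBA hε.le) (by positivity)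
        _ = ε ^ ((1:ℝ)/ℓ) * a⁻¹ := by
            rw [Real.mul_rpow hε.le (by positivity), Real.inv_rpow hA.le, ← hadef]
    rw [hRdef]
    have h2 : (0:ℝ) < 1 + δ := by linarith
    nlinarith
  set s : Set ℂ := Metric.closedBall 0 R with hsdef
  have hsη : s ⊆ Metric.closedBall 0 η := Metric.closedBall_subset_closedBall hRη
  set T : ℂ → ℂ := fun w => c₀ * F w with hTdef
  have hFbound : ∀ w ∈ s, ‖F w‖ ≤ 1 + δ := by
    intro w hw
    have hwU : ‖ρ w - 1‖ ≤ δ := by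
      have := (hsub (hsη hw)).1.2
      simpa [Complex.dist_eq] using this
    have hρle : ‖ρ w‖ ≤ 1 + δ := by
      calc ‖ρ w‖ = ‖ρ w - 1 + 1‖ := by ring_nf
        _ ≤ ‖ρ w - 1‖ + 1 := by
            simpa using norm_add_le (ρ w - 1) 1
        _ ≤ 1 + δ := by linarith
    have hFw : ‖F w‖ = ‖ρ w‖ ^ ((1:ℝ)/ℓ) := by
      rw [hFdef]
      simp only
      rw [hcast, Complex.norm_cpow_real]
    rw [hFw]
    calc ‖ρ w‖ ^ ((1:ℝ)/ℓ) ≤ ((1+δ) ^ ℓ) ^ ((1:ℝ)/ℓ) := by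
          apply Real.rpow_le_rpow (norm_nonneg _) _ (by positivity)
          exact le_trans hρle (le_self_pow₀ (by linarith) hℓ0)
      _ = 1 + δ := by
          rw [one_div, Real.pow_rpow_inv_natCast (by linarith) hℓ0]
  have hmaps : Set.MapsTo T s s := by
    intro w hw
    rw [hsdef, Metric.mem_closedBall, dist_zero_right, hTdef]
    simp only [norm_mul]
    calc ‖c₀‖ * ‖F w‖ ≤ ‖c₀‖ * (1 + δ) := by
          exact mul_le_mul_of_nonneg_left (hFbound w hw) (norm_nonneg _)
      _ ≤ R := hc0R
  have hTlip : LipschitzOnWith (‖c₀‖₊ * K) T s := by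
    have hFlip : LipschitzOnWith K F s := hlip.mono (fun w hw => (hsub (hsη hw)).1.1)
    have hmul : LipschitzWith ‖c₀‖₊ (fun x : ℂ => c₀ * x) := by
      simpa [smul_eq_mul] using lipschitzWith_smul (β := ℂ) c₀
    exact hmul.comp_lipschitzOnWith hFlip
  have hc₀K : ‖c₀‖ * Kr < 1 := by
    have h1 : ε * B < ((Kr+1)⁻¹) ^ ℓ := by
      rw [inv_pow]
      calc ε * B < (B * (Kr+1) ^ ℓ)⁻¹ * B := by
            exact mul_lt_mul_of_pos_right hε2 hB
        _ = ((Kr+1) ^ ℓ)⁻¹ := by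
            rw [mul_inv, mul_comm, ← mul_assoc, mul_inv_cancel₀ hB.ne', one_mul]
    have h2 : (ε * B) ^ ((1:ℝ)/ℓ) < (Kr+1)⁻¹ := by
      have h5 := Real.rpow_lt_rpow (by positivity) h1 (show (0:ℝ) < (1:ℝ)/ℓ by positivity)
      have h6 : (0:ℝ) ≤ (Kr+1)⁻¹ := inv_nonneg.2 (by linarith)
      calc (ε * B) ^ ((1:ℝ)/ℓ) < (((Kr+1)⁻¹) ^ ℓ) ^ ((1:ℝ)/ℓ) := h5
        _ = (Kr+1)⁻¹ := by rw [one_div]; exact Real.pow_rpow_inv_natCast h6 hℓ0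
    rw [habsc]
    calc (ε * B) ^ ((1:ℝ)/ℓ) * Kr ≤ (Kr+1)⁻¹ * Kr := by
          exact mul_le_mul_of_nonneg_right h2.le hKr
      _ < 1 := by
          have h3 : (0:ℝ) < Kr + 1 := by linarith
          have h4 : (Kr+1)⁻¹ * Kr = Kr / (Kr+1) := by ring
          rw [h4, div_lt_one h3]
          linarith
  have hK' : (‖c₀‖₊ * K : NNReal) < 1 := by
    rw [← NNReal.coe_lt_coe]
    push_cast
    simpa [hKrdef] using hc₀K
  have hsc : IsComplete s := Metric.isClosed_closedBall.isComplete
  have h0s : (0:ℂ) ∈ s := Metric.mem_closedBall_self hR0.le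
  have hcon : ContractingWith (‖c₀‖₊ * K) (hmaps.restrict T s s) :=
    ⟨hK', hTlip.mapsToRestrict hmaps⟩
  obtain ⟨w, hws, hfix, -, -⟩ := hcon.exists_fixedPoint' hsc hmaps h0s (edist_ne_top _ _)
  -- the root
  have hwG : G.eval ((r:ℂ) + w) ≠ 0 := (hsub (hsη hws)).2
  have hwpow : w ^ ℓ = (ε:ℂ) * hfun ((r:ℂ) + w) := by
    have hTw : c₀ * F w = w := hfix
    have hc₀pow : c₀ ^ ℓ = (ε:ℂ) * hfun (r:ℂ) := by
      rw [hc₀def]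
      exact Complex.cpow_nat_inv_pow _ hℓ0
    have hFpow : (F w) ^ ℓ = ρ w := by
      rw [hFdef]
      exact Complex.cpow_nat_inv_pow _ hℓ0
    calc w ^ ℓ = (c₀ * F w) ^ ℓ := by rw [hTw]
      _ = c₀ ^ ℓ * (F w) ^ ℓ := mul_pow _ _ _
      _ = ((ε:ℂ) * hfun (r:ℂ)) * (hfun ((r:ℂ)+w) / hfun (r:ℂ)) := by
          rw [hc₀pow, hFpow, hρdef]
      _ = (ε:ℂ) * hfun ((r:ℂ) + w) := by
          field_simp
  refine ⟨(r:ℂ) + w, ?_, ?_⟩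
  · show ((p + C ε * φ k).map (algebraMap ℝ ℂ)).eval ((r:ℂ) + w) = 0
    rw [hQev ε w, hwpow, hhdef]
    field_simp
    ring
  · have hwR : ‖w‖ ≤ R := by
      have := hws
      rw [hsdef, Metric.mem_closedBall, dist_zero_right] at this
      exact this
    calc ‖(r:ℂ) - ((r:ℂ) + w)‖ = ‖w‖ := by
          rw [show ((r:ℂ) - ((r:ℂ) + w)) = -w by ring, norm_neg]
      _ ≤ R := hwR
end
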